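/- Let X be a compact Hausdorff topological space and μ a finite Borel measure on X. Let E : C(X,ℝ) → ℝ be concave (E((1−t)u + t v) ≥ (1−t)E(u) + t E(v) for all u, v ∈ C(X,ℝ) and t ∈ [0,1]), monotone (u ≤ v pointwise implies E(u) ≤ E(v)), and translation-equivariant (E(u + c) = E(u) + c for every constant c ∈ ℝ). Let P : C(X,ℝ) → C(X,ℝ) be concave (P((1−t)u + t v) ≥ (1−t)P(u) + t P(v) pointwise), monotone (u ≤ v pointwise implies P(u) ≤ P(v) pointwise), and 1-Lipschitz for the supremum norm. Fix f, g ∈ C(X,ℝ), and assume that for every ψ ∈ C(X,ℝ) the right derivative at t = 0 of t ↦ E((1−t)·P(f) + t·ψ) exists and equals ∫_X (ψ − P(f)) dμ. Then the right derivatives at t = 0 of t ↦ E(P(f + t·g)) and of t ↦ ∫_X P(f + t·g) dμ both exist and are equal. -/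

import Mathlib

open Filter MeasureTheory Set

/-- linearization lemma for the derivative of the composed energy:
if `E` is concave, monotone and translation-equivariant, `P` is concave,
monotone and 1-Lipschitz, and for every `ψ` the right derivative at `t = 0` of
`t ↦ E((1−t)·P(f) + t·ψ)` equals `∫ (ψ − P(f)) dμ`, then the right derivatives
at `t = 0` of `t ↦ E(P(f + t·g))` and of `t ↦ ∫ P(f + t·g) dμ` both exist and
are equal. -/
theorem stmt5
    {X : Type*} [TopologicalSpace X] [CompactSpace X] [T2Space X]
    [MeasurableSpace X] [BorelSpace X]
    (μ : Measure X) [IsFiniteMeasure μ]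
    (E : C(X, ℝ) → ℝ)
    (hEconc : ∀ u v : C(X, ℝ), ∀ t ∈ Set.Icc (0:ℝ) 1,
      (1 - t) * E u + t * E v ≤ E ((1 - t) • u + t • v))
    (hEmono : ∀ u v : C(X, ℝ), (∀ x, u x ≤ v x) → E u ≤ E v)
    (hEtrans : ∀ (u : C(X, ℝ)) (c : ℝ), E (u + ContinuousMap.const X c) = E u + c)
    (P : C(X, ℝ) → C(X, ℝ))
    (hPconc : ∀ u v : C(X, ℝ), ∀ t ∈ Set.Icc (0:ℝ) 1, ∀ x : X,
      (1 - t) * P u x + t * P v x ≤ P ((1 - t) • u + t • v) x)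
    (hPmono : ∀ u v : C(X, ℝ), (∀ x, u x ≤ v x) → ∀ x, P u x ≤ P v x)
    (hPlip : LipschitzWith 1 P)
    (f g : C(X, ℝ))
    (hderiv : ∀ ψ : C(X, ℝ),
      Tendsto (fun t : ℝ => (E ((1 - t) • P f + t • ψ) - E (P f)) / t)
        (nhdsWithin 0 (Set.Ioi 0))
        (nhds (∫ x, (ψ x - P f x) ∂μ))) :
    ∃ L : ℝ,
      Tendsto (fun t : ℝ => (E (P (f + t • g)) - E (P f)) / t)
        (nhdsWithin 0 (Set.Ioi 0)) (nhds L) ∧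
      Tendsto (fun t : ℝ => ((∫ x, P (f + t • g) x ∂μ) - ∫ x, P f x ∂μ) / t)
        (nhdsWithin 0 (Set.Ioi 0)) (nhds L) := by
  classical
  set φ : ℝ → C(X, ℝ) := fun t => P (f + t • g) with hφ
  have hφ0 : φ 0 = P f := by simp [hφ]
  have hint : ∀ h : C(X, ℝ), Integrable (fun x => h x) μ := fun h =>
    h.continuous.integrable_of_hasCompactSupport (HasCompactSupport.of_compactSpace _)
  set ℓ : ℝ → ℝ := fun t => ∫ x, φ t x ∂μ with hℓ
  -- pointwise concavity of `t ↦ φ t x`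
  have hφconc : ∀ a b : ℝ, ∀ r ∈ Icc (0:ℝ) 1, ∀ x,
      (1 - r) * φ a x + r * φ b x ≤ φ ((1 - r) * a + r * b) x := by
    intro a b r hr x
    have key : (1 - r) • (f + a • g) + r • (f + b • g)
        = f + ((1 - r) * a + r * b) • g := by
      ext y
      simp only [ContinuousMap.add_apply, ContinuousMap.smul_apply, smul_eq_mul]
      ring
    have h := hPconc (f + a • g) (f + b • g) r hr x
    rw [key] at h
    exact h
  -- concavity of ℓ
  have hℓconc : ConcaveOn ℝ univ ℓ := by
    refine ⟨convex_univ, ?_⟩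
    intro a _ b _ p q hp hq hpq
    have hq1 : q ∈ Icc (0:ℝ) 1 := ⟨hq, by linarith⟩
    have hp' : p = 1 - q := by linarith
    have h1 : p • ℓ a + q • ℓ b = ∫ x, ((1 - q) * φ a x + q * φ b x) ∂μ := by
      rw [integral_add ((hint _).const_mul _) ((hint _).const_mul _),
        integral_const_mul, integral_const_mul, hp']
      simp [hℓ, smul_eq_mul]
    rw [h1, hp', smul_eq_mul, smul_eq_mul]
    exact integral_mono (((hint _).const_mul _).add ((hint _).const_mul _)) (hint _)
      (fun x => hφconc a b q hq1 x)
  -- slopes of ℓ at 0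
  set sl : ℝ → ℝ := fun t => (ℓ t - ℓ 0) / t with hsl
  have hslanti : AntitoneOn sl (Ioi (0:ℝ)) := by
    intro s hs t ht hst
    have h := hℓconc.slope_anti (mem_univ (0:ℝ))
      ⟨mem_univ s, by simpa using ne_of_gt hs⟩
      ⟨mem_univ t, by simpa using ne_of_gt ht⟩ hst
    simpa [hsl, slope_def_field] using h
  -- slopes are bounded above
  have hbd : ∀ t ∈ Ioi (0:ℝ), sl t ≤ ‖g‖ * (μ univ).toReal := by
    intro t ht
    have hdist : ∀ x, φ t x - φ 0 x ≤ t * ‖g‖ := by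
      intro x
      have h1 : dist (φ t x) (φ 0 x) ≤ dist (φ t) (φ 0) :=
        ContinuousMap.dist_apply_le_dist x
      have h2 : dist (φ t) (φ 0) ≤ t * ‖g‖ := by
        have hd := hPlip.dist_le_mul (f + t • g) (f + (0:ℝ) • g)
        rw [NNReal.coe_one, one_mul] at hd
        have h3 : dist (f + t • g) (f + (0:ℝ) • g) = t * ‖g‖ := by
          rw [dist_eq_norm]
          have he : (f + t • g) - (f + (0:ℝ) • g) = t • g := by ext y; simp
          rw [he]
          rw [show ‖t • g‖ = ‖t‖ * ‖g‖ from norm_smul t g]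
          simp [Real.norm_eq_abs, abs_of_pos (mem_Ioi.1 ht)]
        calc dist (φ t) (φ 0) = dist (P (f + t • g)) (P (f + (0:ℝ) • g)) := by
              simp only [hφ]
          _ ≤ dist (f + t • g) (f + (0:ℝ) • g) := hd
          _ = t * ‖g‖ := h3
      have h4 : φ t x - φ 0 x ≤ dist (φ t x) (φ 0 x) :=
        (le_abs_self _).trans_eq (Real.dist_eq _ _).symm
      exact h4.trans (h1.trans h2)
    have h5 : ℓ t - ℓ 0 ≤ t * (‖g‖ * (μ univ).toReal) := by
      have hi := integral_mono (μ := μ) (f := fun x => φ t x - φ 0 x)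
        (g := fun _ => t * ‖g‖) ((hint (φ t)).sub (hint (φ 0)))
        (integrable_const _) hdist
      rw [integral_sub (hint (φ t)) (hint (φ 0)), integral_const, smul_eq_mul] at hi
      calc ℓ t - ℓ 0 ≤ (μ univ).toReal * (t * ‖g‖) := hi
        _ = t * (‖g‖ * (μ univ).toReal) := by ring
    rw [hsl]
    rw [div_le_iff₀ (mem_Ioi.1 ht)]
    calc ℓ t - ℓ 0 ≤ t * (‖g‖ * (μ univ).toReal) := h5
      _ = ‖g‖ * (μ univ).toReal * t := by ring
  have hbdd : BddAbove (sl '' Ioi (0:ℝ)) := by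
    refine ⟨‖g‖ * (μ univ).toReal, ?_⟩
    rintro y ⟨t, ht, rfl⟩
    exact hbd t ht
  -- the limit L of the slopes
  set L : ℝ := sSup (sl '' Ioi (0:ℝ)) with hL
  have hslL : Tendsto sl (nhdsWithin 0 (Ioi 0)) (nhds L) :=
    hslanti.tendsto_nhdsGT hbdd
  -- the second tendsto of the statement is exactly hslL
  have hsl_eq : (fun t : ℝ => ((∫ x, P (f + t • g) x ∂μ) - ∫ x, P f x ∂μ) / t) = sl := by
    funext t
    simp [hsl, hℓ, hφ]
  -- gradient inequality for E
  have hgrad : ∀ ψ : C(X, ℝ), E ψ - E (P f) ≤ ∫ x, (ψ x - P f x) ∂μ := by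
    intro ψ
    refine ge_of_tendsto (hderiv ψ) ?_
    filter_upwards [Ioc_mem_nhdsGT_of_mem (⟨le_refl (0:ℝ), one_pos⟩ : (0:ℝ) ∈ Ico 0 1)]
      with t ht
    have h := hEconc (P f) ψ t ⟨ht.1.le, ht.2⟩
    rw [le_div_iff₀ ht.1]
    nlinarith [h]
  -- upper bound for the composed quotient
  have hupper : ∀ t ∈ Ioi (0:ℝ), (E (φ t) - E (P f)) / t ≤ sl t := by
    intro t ht
    have h := hgrad (φ t)
    have h2 : ∫ x, (φ t x - P f x) ∂μ = ℓ t - ℓ 0 := by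
      rw [integral_sub (hint (φ t)) (hint (P f))]
      simp [hℓ, hφ0]
    rw [h2] at h
    exact div_le_div_of_nonneg_right h (mem_Ioi.1 ht).le
  -- main convergence
  refine ⟨L, ?_, by rw [hsl_eq]; exact hslL⟩
  rw [tendsto_order]
  constructor
  · -- lower bound
    intro a ha
    -- pick s > 0 with a < sl s
    have : ∀ᶠ t in nhdsWithin (0:ℝ) (Ioi 0), a < sl t :=
      hslL.eventually (eventually_gt_nhds ha)
    obtain ⟨s, hsl_s, hs⟩ := (this.and self_mem_nhdsWithin).exists
    have hs0 : (0:ℝ) < s := hs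
    -- auxiliary limit
    have hℓs : ∫ x, (φ s x - P f x) ∂μ = ℓ s - ℓ 0 := by
      rw [integral_sub (hint (φ s)) (hint (P f))]
      simp [hℓ, hφ0]
    have hcomp : Tendsto (fun t : ℝ => t / s) (nhdsWithin 0 (Ioi 0)) (nhdsWithin 0 (Ioi 0)) := by
      apply tendsto_nhdsWithin_of_tendsto_nhds_of_eventually_within
      · have hh : Tendsto (fun t : ℝ => t / s) (nhds 0) (nhds (0 / s)) :=
          tendsto_id.div_const s
        rw [zero_div] at hh
        exact hh.mono_left nhdsWithin_le_nhds
      · filter_upwards [self_mem_nhdsWithin] with t ht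
        exact div_pos ht hs0
    have haux : Tendsto
        (fun t : ℝ => ((E ((1 - t / s) • P f + (t / s) • φ s) - E (P f)) / (t / s)) / s)
        (nhdsWithin 0 (Ioi 0)) (nhds ((ℓ s - ℓ 0) / s)) := by
      rw [← hℓs]
      exact (((hderiv (φ s)).comp hcomp).div_const s)
    have hslss : a < (ℓ s - ℓ 0) / s := hsl_s
    have hev1 : ∀ᶠ t in nhdsWithin (0:ℝ) (Ioi 0),
        a < ((E ((1 - t / s) • P f + (t / s) • φ s) - E (P f)) / (t / s)) / s :=
      haux.eventually (eventually_gt_nhds hslss)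
    filter_upwards [hev1, Ioc_mem_nhdsGT_of_mem (⟨le_refl (0:ℝ), hs0⟩ : (0:ℝ) ∈ Ico 0 s)]
      with t ht1 ht2
    have ht0 : (0:ℝ) < t := ht2.1
    have hr : t / s ∈ Icc (0:ℝ) 1 :=
      ⟨(div_pos ht0 hs0).le, (div_le_one hs0).2 ht2.2⟩
    -- monotonicity step
    have hkey : E ((1 - t / s) • P f + (t / s) • φ s) ≤ E (φ t) := by
      apply hEmono
      intro x
      have h := hPconc f (f + s • g) (t / s) hr x
      have hcomb : (1 - t / s) • f + (t / s) • (f + s • g) = f + t • g := by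
        ext y
        simp only [ContinuousMap.add_apply, ContinuousMap.smul_apply, smul_eq_mul]
        field_simp
        ring
      rw [hcomb] at h
      simpa [ContinuousMap.add_apply, ContinuousMap.smul_apply, smul_eq_mul, hφ] using h
    have heq : ((E ((1 - t / s) • P f + (t / s) • φ s) - E (P f)) / (t / s)) / s
        = (E ((1 - t / s) • P f + (t / s) • φ s) - E (P f)) / t := by
      rw [div_div, div_mul_cancel₀ _ (ne_of_gt hs0)]
    rw [heq] at ht1
    calc a < (E ((1 - t / s) • P f + (t / s) • φ s) - E (P f)) / t := ht1
      _ ≤ (E (φ t) - E (P f)) / t :=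
          div_le_div_of_nonneg_right (by linarith [hkey]) ht0.le
      _ = (E (P (f + t • g)) - E (P f)) / t := rfl
  · -- upper bound
    intro a ha
    have hev : ∀ᶠ t in nhdsWithin (0:ℝ) (Ioi 0), sl t < a :=
      hslL.eventually (eventually_lt_nhds ha)
    filter_upwards [hev, self_mem_nhdsWithin] with t ht1 ht2
    exact lt_of_le_of_lt (hupper t ht2) ht1
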